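/- Let n be a natural number, let B be an n×n real matrix, and let K₂, K₃ ≥ 0 be real numbers such that both B + K₂·I and K₃·I − B are positive semidefinite. Then for every n×n real matrix A and every real δ > 0, one has ∑_{i,j} B_{ij}·A_{ij} ≤ δ·∑_{i,j} (A_{ij})² + (n/(4δ))·(max{K₂, K₃})². -/

import Mathlib

lemma psd_smul_one {m : ℕ} {c : ℝ} (hc : 0 ≤ c) :
    (c • (1 : Matrix (Fin m) (Fin m) ℝ)).PosSemidef := by
  have : c • (1 : Matrix (Fin m) (Fin m) ℝ) = Matrix.diagonal (fun _ => c) := by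
    ext i j
    by_cases h : i = j <;> simp [Matrix.one_apply, h]
  rw [this]
  exact Matrix.PosSemidef.diagonal (fun _ => hc)

lemma trace_mul_psd_nonneg {m : ℕ} {P Q : Matrix (Fin m) (Fin m) ℝ}
    (hP : P.PosSemidef) (hQ : Q.PosSemidef) : 0 ≤ (P * Q).trace := by
  open scoped MatrixOrder in
  obtain ⟨C, hC⟩ : ∃ C : Matrix (Fin m) (Fin m) ℝ, P = C.conjTranspose * C :=
    CStarAlgebra.nonneg_iff_eq_star_mul_self.mp hP.nonneg
  have hpsd : (C * Q * C.conjTranspose).PosSemidef := hQ.mul_mul_conjTranspose_same C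
  have : (P * Q).trace = (C * Q * C.conjTranspose).trace := by
    rw [hC, Matrix.mul_assoc, Matrix.trace_mul_cycle, Matrix.mul_assoc]
  rw [this, Matrix.trace]
  apply Finset.sum_nonneg
  intro i _
  simpa using hpsd.2 (Finsupp.single i 1)

theorem frobenius_inner_bound_of_psd (n : ℕ) (B : Matrix (Fin n) (Fin n) ℝ) (K₂ K₃ : ℝ)
    (hK₂ : 0 ≤ K₂) (hK₃ : 0 ≤ K₃)
    (h₁ : (B + K₂ • (1 : Matrix (Fin n) (Fin n) ℝ)).PosSemidef)
    (h₂ : (K₃ • (1 : Matrix (Fin n) (Fin n) ℝ) - B).PosSemidef)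
    (A : Matrix (Fin n) (Fin n) ℝ) (δ : ℝ) (hδ : 0 < δ) :
    ∑ i, ∑ j, B i j * A i j ≤
      δ * ∑ i, ∑ j, (A i j) ^ 2 + (n / (4 * δ)) * (max K₂ K₃) ^ 2 := by
  set K := max K₂ K₃ with hK
  have hK0 : 0 ≤ K := le_trans hK₂ (le_max_left _ _)
  -- P = K•1 - B and Q = K•1 + B are PSD
  have hP : (K • (1 : Matrix (Fin n) (Fin n) ℝ) - B).PosSemidef := by
    have := (psd_smul_one (m := n) (c := K - K₃) (by simp [hK])).add h₂
    convert this using 1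
    ext i j
    simp [Matrix.one_apply, sub_smul]
  have hQ : (K • (1 : Matrix (Fin n) (Fin n) ℝ) + B).PosSemidef := by
    have := (psd_smul_one (m := n) (c := K - K₂) (by simp [hK])).add h₁
    convert this using 1
    ext i j
    simp [Matrix.one_apply, sub_smul]
  -- B is symmetric
  have hBsymm : ∀ i j, B j i = B i j := by
    intro i j
    by_cases h : i = j
    · rw [h]
    · have hh := congrFun (congrFun h₁.isHermitian i) j
      simpa [Matrix.conjTranspose_apply, Matrix.one_apply, Matrix.add_apply, h, Ne.symm h]
        using hh
  -- trace bound: ∑∑ B² ≤ n K²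
  have htr : 0 ≤ ((K • (1 : Matrix (Fin n) (Fin n) ℝ) - B) *
      (K • (1 : Matrix (Fin n) (Fin n) ℝ) + B)).trace := trace_mul_psd_nonneg hP hQ
  have hexp : ((K • (1 : Matrix (Fin n) (Fin n) ℝ) - B) *
      (K • (1 : Matrix (Fin n) (Fin n) ℝ) + B)).trace
      = n * K ^ 2 - ∑ i, ∑ j, (B i j) ^ 2 := by
    have h1 : (K • (1 : Matrix (Fin n) (Fin n) ℝ) - B) *
        (K • (1 : Matrix (Fin n) (Fin n) ℝ) + B)
        = (K * K) • (1 : Matrix (Fin n) (Fin n) ℝ) - B * B := by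
      rw [Matrix.sub_mul, Matrix.mul_add, Matrix.mul_add]
      simp [Matrix.smul_mul, Matrix.mul_smul, smul_smul]
      abel
    rw [h1, Matrix.trace_sub, Matrix.trace_smul, Matrix.trace_one]
    have h2 : (B * B).trace = ∑ i, ∑ j, (B i j) ^ 2 := by
      rw [Matrix.trace]
      simp only [Matrix.diag_apply, Matrix.mul_apply]
      refine Finset.sum_congr rfl fun i _ => Finset.sum_congr rfl fun j _ => ?_
      rw [hBsymm i j]; ring
    rw [h2]
    simp [Finset.card_univ, pow_two]
    ring
  have hBsq : ∑ i, ∑ j, (B i j) ^ 2 ≤ n * K ^ 2 := by linarith [htr, hexp ▸ htr]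
  -- Young's inequality termwise
  have hyoung : ∑ i, ∑ j, B i j * A i j ≤
      δ * ∑ i, ∑ j, (A i j) ^ 2 + (1 / (4 * δ)) * ∑ i, ∑ j, (B i j) ^ 2 := by
    rw [Finset.mul_sum, Finset.mul_sum, ← Finset.sum_add_distrib]
    refine Finset.sum_le_sum fun i _ => ?_
    rw [Finset.mul_sum, Finset.mul_sum, ← Finset.sum_add_distrib]
    refine Finset.sum_le_sum fun j _ => ?_
    have h4δ : 0 < 4 * δ := by linarith
    have key : B i j * A i j - δ * A i j ^ 2 ≤ 1 / (4 * δ) * B i j ^ 2 := by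
      rw [div_mul_eq_mul_div, one_mul, le_div_iff₀ h4δ]
      nlinarith [sq_nonneg (2 * δ * A i j - B i j)]
    linarith
  calc ∑ i, ∑ j, B i j * A i j
      ≤ δ * ∑ i, ∑ j, (A i j) ^ 2 + (1 / (4 * δ)) * ∑ i, ∑ j, (B i j) ^ 2 := hyoung
    _ ≤ δ * ∑ i, ∑ j, (A i j) ^ 2 + (n / (4 * δ)) * K ^ 2 := by
        have h : (1 / (4 * δ)) * ∑ i, ∑ j, (B i j) ^ 2 ≤ (1 / (4 * δ)) * (n * K ^ 2) := by
          apply mul_le_mul_of_nonneg_left hBsq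
          positivity
        have h2 : (1 / (4 * δ)) * (↑n * K ^ 2) = (↑n / (4 * δ)) * K ^ 2 := by ring
        linarith
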